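/- arXiv:math-ph/0606047 — 2 statements merged into one kernel-verified Lean document; each statement's English description precedes it below -/
import Mathlib

section
/- Let (s_1,…,s_N) and (s'_1,…,s'_N) be Cuntz families of order N on complex Hilbert spaces H and H' respectively, let J be an infinite word with letters in {1,…,N}, and let Ω ∈ H and Ω' ∈ H' be UHF-cyclic unit vectors both satisfying the P[J]-condition (with respect to the respective families). Then there exists a unitary U : H → H' such that U Ω = Ω' and U (s_K s_L^*) = (s'_K (s'_L)^*) U for all finite words K, L with |K| = |L|. In particular, for each J the class P[J] contains only one unitary equivalence class. -/
noncomputable section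

def IsCuntzFamily {H : Type*} [NormedAddCommGroup H] [InnerProductSpace ℂ H]
    [CompleteSpace H] {N : ℕ} (s : Fin N → H →L[ℂ] H) : Prop :=
  (∀ i j, star (s i) * s j = if i = j then (1 : H →L[ℂ] H) else 0) ∧
  ∑ i, s i * star (s i) = 1

def wordOp {H : Type*} [NormedAddCommGroup H] [InnerProductSpace ℂ H]
    [CompleteSpace H] {N : ℕ} (s : Fin N → H →L[ℂ] H) : List (Fin N) → H →L[ℂ] H
  | [] => 1
  | j :: J => s j * wordOp s J

/-- Closed linear span of `{s_K s_L^* v : |K| = |L|}`. -/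
def UHFSpan {H : Type*} [NormedAddCommGroup H] [InnerProductSpace ℂ H]
    [CompleteSpace H] {N : ℕ} (s : Fin N → H →L[ℂ] H) (v : H) : Submodule ℂ H :=
  (Submodule.span ℂ {x : H | ∃ K L : List (Fin N), K.length = L.length ∧
      x = (wordOp s K * star (wordOp s L)) v}).topologicalClosure

/-- `Ω` is UHF-cyclic: the closed span of `{s_K s_L^* Ω : |K| = |L|}` is the whole space. -/
def IsUHFCyclic {H : Type*} [NormedAddCommGroup H] [InnerProductSpace ℂ H]
    [CompleteSpace H] {N : ℕ} (s : Fin N → H →L[ℂ] H) (Ω : H) : Prop :=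
  UHFSpan s Ω = ⊤

/-- The `P[w]`-condition for an infinite word `w` (0-indexed). -/
def PCond {H : Type*} [NormedAddCommGroup H] [InnerProductSpace ℂ H]
    [CompleteSpace H] {N : ℕ} (s : Fin N → H →L[ℂ] H) (w : ℕ → Fin N) (Ω : H) : Prop :=
  ∀ n : ℕ, (wordOp s (List.ofFn fun k : Fin n => w k) *
      star (wordOp s (List.ofFn fun k : Fin n => w k))) Ω = Ω

namespace CuntzAux

local notation "⟪" x ", " y "⟫" => @inner ℂ _ _ x y

variable {H : Type*} [NormedAddCommGroup H] [InnerProductSpace ℂ H] [CompleteSpace H]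
variable {N : ℕ}

lemma wordOp_append (s : Fin N → H →L[ℂ] H) (K L : List (Fin N)) :
    wordOp s (K ++ L) = wordOp s K * wordOp s L := by
  induction K with
  | nil => simp [wordOp]
  | cons a K ih => simp [wordOp, ih, mul_assoc]

lemma star_wordOp_mul_append {s : Fin N → H →L[ℂ] H} (hs : IsCuntzFamily s)
    (L R : List (Fin N)) :
    star (wordOp s L) * wordOp s (L ++ R) = wordOp s R := by
  induction L with
  | nil => simp [wordOp]
  | cons a L ih =>
    have h1 : star (s a) * s a = 1 := by simpa using hs.1 a a
    calc star (wordOp s (a :: L)) * wordOp s ((a :: L) ++ R)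
        = star (wordOp s L) * ((star (s a) * s a) * wordOp s (L ++ R)) := by
          simp only [wordOp, List.cons_append, List.append_eq, star_mul, mul_assoc]
      _ = wordOp s R := by rw [h1, one_mul, ih]

lemma star_wordOp_mul_orth {s : Fin N → H →L[ℂ] H} (hs : IsCuntzFamily s) :
    ∀ {L M : List (Fin N)}, ¬ L <+: M → ¬ M <+: L →
      star (wordOp s L) * wordOp s M = 0 := by
  intro L
  induction L with
  | nil => intro M h1 _; exact absurd List.nil_prefix h1
  | cons a L ih =>
    intro M h1 h2
    match M with
    | [] => exact absurd List.nil_prefix h2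
    | b :: M =>
      have key : star (wordOp s (a :: L)) * wordOp s (b :: M)
          = star (wordOp s L) * ((star (s a) * s b) * wordOp s M) := by
        simp only [wordOp, star_mul, mul_assoc]
      by_cases hab : a = b
      · subst hab
        rw [key, show star (s a) * s a = 1 by simpa using hs.1 a a, one_mul]
        exact ih (fun h => h1 (List.cons_prefix_cons.mpr ⟨rfl, h⟩))
          (fun h => h2 (List.cons_prefix_cons.mpr ⟨rfl, h⟩))
      · rw [key, show star (s a) * s b = 0 by simpa [hab] using hs.1 a b]
        simp

lemma star_wordOp_mul_prefix {s : Fin N → H →L[ℂ] H} (hs : IsCuntzFamily s)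
    {L M : List (Fin N)} (h : L <+: M) :
    star (wordOp s L) * wordOp s M = wordOp s (M.drop L.length) := by
  obtain ⟨R, rfl⟩ := h
  rw [star_wordOp_mul_append hs, List.drop_left]

lemma star_wordOp_mul_self {s : Fin N → H →L[ℂ] H} (hs : IsCuntzFamily s)
    (L : List (Fin N)) : star (wordOp s L) * wordOp s L = 1 := by
  have := star_wordOp_mul_prefix hs (List.prefix_rfl (l := L))
  simpa [List.drop_length, wordOp] using this

lemma star_wordOp_mul_eqlen {s : Fin N → H →L[ℂ] H} (hs : IsCuntzFamily s)
    {L M : List (Fin N)} (h : L.length = M.length) :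
    star (wordOp s L) * wordOp s M = if L = M then 1 else 0 := by
  by_cases he : L = M
  · subst he; simp [star_wordOp_mul_self hs]
  · rw [if_neg he]
    exact star_wordOp_mul_orth hs (fun hp => he (hp.eq_of_length h))
      (fun hp => he ((hp.eq_of_length h.symm)).symm)

def Jl (J : ℕ → Fin N) (n : ℕ) : List (Fin N) := List.ofFn fun k : Fin n => J k

def wseg (J : ℕ → Fin N) (a b : ℕ) : List (Fin N) :=
  List.ofFn fun k : Fin (b - a) => J (a + k)

lemma Jl_length (J : ℕ → Fin N) (n : ℕ) : (Jl J n).length = n := by simp [Jl]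

lemma wseg_length (J : ℕ → Fin N) (a b : ℕ) : (wseg J a b).length = b - a := by simp [wseg]

lemma Jl_add (J : ℕ → Fin N) (m k : ℕ) :
    Jl J (m + k) = Jl J m ++ List.ofFn fun i : Fin k => J (m + ↑i) := by
  rw [Jl, List.ofFn_add]
  simp [Jl]

lemma Jl_append (J : ℕ → Fin N) {m p : ℕ} (h : m ≤ p) :
    Jl J m ++ wseg J m p = Jl J p := by
  have h0 : m + (p - m) = p := by omega
  conv_rhs => rw [← h0, Jl_add]
  rfl

def OmV (s : Fin N → H →L[ℂ] H) (J : ℕ → Fin N) (Ω : H) (n : ℕ) : H :=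
  (star (wordOp s (Jl J n))) Ω

lemma star_word_Omega {s : Fin N → H →L[ℂ] H} (hs : IsCuntzFamily s) {J : ℕ → Fin N}
    {Ω : H} (hP : PCond s J Ω) (L : List (Fin N)) :
    (star (wordOp s L)) Ω = if L = Jl J L.length then OmV s J Ω L.length else 0 := by
  have hp : ∀ n, (wordOp s (Jl J n) * star (wordOp s (Jl J n))) Ω = Ω := hP
  conv_lhs => rw [← hp L.length]
  rw [← ContinuousLinearMap.mul_apply, ← mul_assoc,
    star_wordOp_mul_eqlen hs (by simp [Jl_length])]
  split_ifs with h
  · rw [one_mul]; rfl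
  · simp

lemma OmV_eq {s : Fin N → H →L[ℂ] H} (hs : IsCuntzFamily s) {J : ℕ → Fin N}
    {Ω : H} (hP : PCond s J Ω) {m p : ℕ} (h : m ≤ p) :
    OmV s J Ω m = wordOp s (wseg J m p) (OmV s J Ω p) := by
  have hp : ∀ n, (wordOp s (Jl J n) * star (wordOp s (Jl J n))) Ω = Ω := hP
  have key : star (wordOp s (Jl J m)) * wordOp s (Jl J p) = wordOp s (wseg J m p) := by
    conv_lhs => rw [← Jl_append J h]
    exact star_wordOp_mul_append hs _ _
  rw [OmV]
  conv_lhs => rw [← hp p]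
  rw [← ContinuousLinearMap.mul_apply, ← mul_assoc, key, ContinuousLinearMap.mul_apply]
  rfl

lemma inner_OmV_self {s : Fin N → H →L[ℂ] H} {J : ℕ → Fin N} {Ω : H}
    (hΩ : ‖Ω‖ = 1) (hP : PCond s J Ω) (p : ℕ) :
    ⟪OmV s J Ω p, OmV s J Ω p⟫ = 1 := by
  have hp : ∀ n, (wordOp s (Jl J n) * star (wordOp s (Jl J n))) Ω = Ω := hP
  have h1 : ⟪OmV s J Ω p, OmV s J Ω p⟫
      = ⟪Ω, (wordOp s (Jl J p) * star (wordOp s (Jl J p))) Ω⟫ := by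
    rw [OmV, ContinuousLinearMap.star_eq_adjoint, ContinuousLinearMap.adjoint_inner_left,
      ContinuousLinearMap.mul_apply]
  rw [h1, hp p, inner_self_eq_norm_sq_to_K, hΩ]
  norm_num

lemma inner_word_OmV {s : Fin N → H →L[ℂ] H} (hs : IsCuntzFamily s) {J : ℕ → Fin N}
    {Ω : H} (hΩ : ‖Ω‖ = 1) (hP : PCond s J Ω) {A B : List (Fin N)}
    (hAB : A.length = B.length) (p : ℕ) :
    ⟪wordOp s A (OmV s J Ω p), wordOp s B (OmV s J Ω p)⟫ = if A = B then 1 else 0 := by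
  have h1 : ⟪wordOp s A (OmV s J Ω p), wordOp s B (OmV s J Ω p)⟫
      = ⟪OmV s J Ω p, (star (wordOp s A) * wordOp s B) (OmV s J Ω p)⟫ := by
    rw [ContinuousLinearMap.mul_apply, ContinuousLinearMap.star_eq_adjoint,
      ContinuousLinearMap.adjoint_inner_right]
  rw [h1, star_wordOp_mul_eqlen hs hAB]
  split_ifs
  · rw [ContinuousLinearMap.one_apply]
    exact inner_OmV_self hΩ hP p
  · simp

lemma inner_word_OmV_le {s : Fin N → H →L[ℂ] H} (hs : IsCuntzFamily s) {J : ℕ → Fin N}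
    {Ω : H} (hΩ : ‖Ω‖ = 1) (hP : PCond s J Ω) {A B : List (Fin N)}
    (h : A.length ≤ B.length) :
    ⟪wordOp s A (OmV s J Ω A.length), wordOp s B (OmV s J Ω B.length)⟫
      = if A ++ wseg J A.length B.length = B then 1 else 0 := by
  rw [OmV_eq hs hP h, ← ContinuousLinearMap.mul_apply, ← wordOp_append]
  exact inner_word_OmV hs hΩ hP
    (by simp only [List.length_append, wseg_length]; omega) _

/-- The universal Gram value of `⟪s_K s_L^* Ω, s_M s_P^* Ω⟫`, depending only on the words. -/
def gram (J : ℕ → Fin N) (K L M P : List (Fin N)) : ℂ :=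
  if L = Jl J L.length ∧ P = Jl J P.length then
    (if K.length ≤ M.length then
      (if K ++ wseg J K.length M.length = M then 1 else 0)
     else
      (if M ++ wseg J M.length K.length = K then 1 else 0))
  else 0

lemma inner_gen {s : Fin N → H →L[ℂ] H} (hs : IsCuntzFamily s) {J : ℕ → Fin N}
    {Ω : H} (hΩ : ‖Ω‖ = 1) (hP : PCond s J Ω) {K L M P : List (Fin N)}
    (hKL : K.length = L.length) (hMP : M.length = P.length) :
    ⟪(wordOp s K * star (wordOp s L)) Ω, (wordOp s M * star (wordOp s P)) Ω⟫
      = gram J K L M P := by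
  rw [ContinuousLinearMap.mul_apply, ContinuousLinearMap.mul_apply,
    star_word_Omega hs hP L, star_word_Omega hs hP P]
  by_cases h1 : L = Jl J L.length
  · by_cases h2 : P = Jl J P.length
    · rw [if_pos h1, if_pos h2]
      simp only [gram]
      rw [if_pos (⟨h1, h2⟩ : _ ∧ _)]
      by_cases hlen : K.length ≤ M.length
      · rw [if_pos hlen, ← hKL, ← hMP]
        exact inner_word_OmV_le hs hΩ hP hlen
      · rw [if_neg hlen, ← hKL, ← hMP, ← inner_conj_symm,
          inner_word_OmV_le hs hΩ hP (le_of_not_ge hlen)]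
        split_ifs <;> simp
    · rw [if_neg h2, map_zero, inner_zero_right]
      simp [gram, h2]
  · rw [if_neg h1, map_zero, inner_zero_left]
    simp [gram, h1]

/-- Index type for the UHF generators. -/
def CIdx (N : ℕ) := {p : List (Fin N) × List (Fin N) // p.1.length = p.2.length}

/-- The generator vectors. -/
def gv (s : Fin N → H →L[ℂ] H) (Ω : H) (i : CIdx N) : H :=
  (wordOp s i.1.1 * star (wordOp s i.1.2)) Ω

lemma inner_lin {s : Fin N → H →L[ℂ] H} (hs : IsCuntzFamily s) {J : ℕ → Fin N}
    {Ω : H} (hΩ : ‖Ω‖ = 1) (hP : PCond s J Ω) (f h : CIdx N →₀ ℂ) :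
    ⟪Finsupp.linearCombination ℂ (gv s Ω) f, Finsupp.linearCombination ℂ (gv s Ω) h⟫
      = ∑ i ∈ f.support, ∑ j ∈ h.support,
          (starRingEnd ℂ) (f i) * (h j * gram J i.1.1 i.1.2 j.1.1 j.1.2) := by
  rw [Finsupp.linearCombination_apply, Finsupp.linearCombination_apply, Finsupp.sum,
    Finsupp.sum, sum_inner]
  refine Finset.sum_congr rfl fun i _ => ?_
  rw [inner_sum]
  refine Finset.sum_congr rfl fun j _ => ?_
  rw [inner_smul_left, inner_smul_right]
  simp only [gv]
  rw [inner_gen hs hΩ hP i.2 j.2]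

lemma op_mul_gen {s : Fin N → H →L[ℂ] H} (hs : IsCuntzFamily s)
    (K L M P : List (Fin N)) :
    (wordOp s K * star (wordOp s L)) * (wordOp s M * star (wordOp s P)) =
      if L <+: M then wordOp s (K ++ M.drop L.length) * star (wordOp s P)
      else if M <+: L then wordOp s K * star (wordOp s (P ++ L.drop M.length))
      else 0 := by
  have base : (wordOp s K * star (wordOp s L)) * (wordOp s M * star (wordOp s P))
      = wordOp s K * ((star (wordOp s L) * wordOp s M) * star (wordOp s P)) := by
    rw [mul_assoc (wordOp s K), ← mul_assoc (star (wordOp s L))]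
  rw [base]
  split_ifs with hpre1 hpre2
  · rw [star_wordOp_mul_prefix hs hpre1, ← mul_assoc, ← wordOp_append]
  · have hmid : star (wordOp s L) * wordOp s M = star (wordOp s (L.drop M.length)) := by
      have h' := star_wordOp_mul_prefix hs hpre2
      calc star (wordOp s L) * wordOp s M
          = star (star (wordOp s M) * wordOp s L) := by rw [star_mul, star_star]
        _ = star (wordOp s (L.drop M.length)) := by rw [h']
    rw [hmid, ← star_mul, ← wordOp_append]
  · rw [star_wordOp_mul_orth hs hpre1 hpre2, zero_mul, mul_zero]

lemma exists_isometry {H H' : Type*} [NormedAddCommGroup H] [InnerProductSpace ℂ H]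
    [CompleteSpace H] [NormedAddCommGroup H'] [InnerProductSpace ℂ H'] [CompleteSpace H']
    {N : ℕ} {s : Fin N → H →L[ℂ] H} {s' : Fin N → H' →L[ℂ] H'}
    (hs : IsCuntzFamily s) (hs' : IsCuntzFamily s') (J : ℕ → Fin N) {Ω : H} {Ω' : H'}
    (hΩ : ‖Ω‖ = 1) (hΩ' : ‖Ω'‖ = 1) (hcyc : IsUHFCyclic s Ω)
    (hP : PCond s J Ω) (hP' : PCond s' J Ω') :
    ∃ A : H →ₗᵢ[ℂ] H', ∀ i : CIdx N, A (gv s Ω i) = gv s' Ω' i := by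
  classical
  set V₁ : (CIdx N →₀ ℂ) →ₗ[ℂ] H := Finsupp.linearCombination ℂ (gv s Ω) with hV₁def
  set V₂ : (CIdx N →₀ ℂ) →ₗ[ℂ] H' := Finsupp.linearCombination ℂ (gv s' Ω') with hV₂def
  have hnorm : ∀ f, ‖V₁ f‖ = ‖V₂ f‖ := by
    intro f
    rw [norm_eq_sqrt_re_inner (𝕜 := ℂ), norm_eq_sqrt_re_inner (𝕜 := ℂ), hV₁def, hV₂def,
      inner_lin hs hΩ hP f f, inner_lin hs' hΩ' hP' f f]
  have hker : LinearMap.ker V₁ ≤ LinearMap.ker V₂ := by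
    intro f hf
    rw [LinearMap.mem_ker] at hf ⊢
    have h := hnorm f
    rw [hf, norm_zero] at h
    exact norm_eq_zero.mp h.symm
  have hdense : Dense ((LinearMap.range V₁ : Submodule ℂ H) : Set H) := by
    rw [Submodule.dense_iff_topologicalClosure_eq_top]
    have hgenset : Set.range (gv s Ω) = {x : H | ∃ K L : List (Fin N),
        K.length = L.length ∧ x = (wordOp s K * star (wordOp s L)) Ω} := by
      ext x
      constructor
      · rintro ⟨⟨⟨K, L⟩, h⟩, rfl⟩; exact ⟨K, L, h, rfl⟩
      · rintro ⟨K, L, h, rfl⟩; exact ⟨⟨(K, L), h⟩, rfl⟩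
    have hr : LinearMap.range V₁ = Submodule.span ℂ {x : H | ∃ K L : List (Fin N),
        K.length = L.length ∧ x = (wordOp s K * star (wordOp s L)) Ω} := by
      rw [hV₁def, Finsupp.range_linearCombination, hgenset]
    rw [hr]
    exact hcyc
  let f₀ : (LinearMap.range V₁ : Submodule ℂ H) →ₗ[ℂ] H' :=
    ((LinearMap.ker V₁).liftQ V₂ hker).comp (LinearMap.quotKerEquivRange V₁).symm.toLinearMap
  have hf₀ : ∀ c : CIdx N →₀ ℂ, f₀ ⟨V₁ c, LinearMap.mem_range_self V₁ c⟩ = V₂ c := by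
    intro c
    have h1 : (LinearMap.quotKerEquivRange V₁).symm ⟨V₁ c, LinearMap.mem_range_self V₁ c⟩
        = Submodule.Quotient.mk c := by
      apply (LinearMap.quotKerEquivRange V₁).injective
      rw [LinearEquiv.apply_symm_apply]
      exact Subtype.ext (LinearMap.quotKerEquivRange_apply_mk V₁ c).symm
    show ((LinearMap.ker V₁).liftQ V₂ hker)
        ((LinearMap.quotKerEquivRange V₁).symm ⟨V₁ c, LinearMap.mem_range_self V₁ c⟩) = V₂ c
    rw [h1, Submodule.liftQ_apply]
  have hnormf₀ : ∀ x : (LinearMap.range V₁ : Submodule ℂ H), ‖f₀ x‖ = ‖(x : H)‖ := by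
    rintro ⟨x, hx⟩
    obtain ⟨c, rfl⟩ := LinearMap.mem_range.mp hx
    rw [hf₀ c, ← hnorm c]
  let Aiso₀ : (LinearMap.range V₁ : Submodule ℂ H) →ₗᵢ[ℂ] H' := ⟨f₀, hnormf₀⟩
  have hdr : DenseRange ⇑(LinearMap.range V₁ : Submodule ℂ H).subtypeL :=
    hdense.denseRange_val
  have hui : IsUniformInducing ⇑(LinearMap.range V₁ : Submodule ℂ H).subtypeL :=
    isUniformEmbedding_subtype_val.isUniformInducing
  let A : H →L[ℂ] H' := Aiso₀.toContinuousLinearMap.extend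
    (LinearMap.range V₁ : Submodule ℂ H).subtypeL
  have hAx : ∀ x : (LinearMap.range V₁ : Submodule ℂ H), A (x : H) = f₀ x := by
    intro x
    exact ContinuousLinearMap.extend_eq Aiso₀.toContinuousLinearMap
      (e := (LinearMap.range V₁ : Submodule ℂ H).subtypeL) hdr hui x
  have hAnorm : ∀ x : H, ‖A x‖ = ‖x‖ := by
    have hsub : ((LinearMap.range V₁ : Submodule ℂ H) : Set H) ⊆ {x : H | ‖A x‖ = ‖x‖} := by
      intro x hx
      show ‖A x‖ = ‖x‖
      rw [show A x = f₀ ⟨x, hx⟩ from hAx ⟨x, hx⟩]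
      exact hnormf₀ ⟨x, hx⟩
    have hcl : IsClosed {x : H | ‖A x‖ = ‖x‖} :=
      isClosed_eq (A.continuous.norm) continuous_norm
    intro x
    have hsubset : closure ((LinearMap.range V₁ : Submodule ℂ H) : Set H)
        ⊆ {x : H | ‖A x‖ = ‖x‖} := hcl.closure_subset_iff.mpr hsub
    have hx : x ∈ closure ((LinearMap.range V₁ : Submodule ℂ H) : Set H) := by
      rw [hdense.closure_eq]; trivial
    exact hsubset hx
  refine ⟨⟨A.toLinearMap, hAnorm⟩, ?_⟩
  intro i
  show A (gv s Ω i) = gv s' Ω' i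
  have hval : V₁ (Finsupp.single i 1) = gv s Ω i := by
    rw [hV₁def, Finsupp.linearCombination_single, one_smul]
  have hmem : gv s Ω i ∈ LinearMap.range V₁ :=
    LinearMap.mem_range.mpr ⟨Finsupp.single i 1, hval⟩
  have h1 : A (gv s Ω i) = f₀ ⟨gv s Ω i, hmem⟩ := hAx ⟨gv s Ω i, hmem⟩
  have h2 : (⟨gv s Ω i, hmem⟩ : (LinearMap.range V₁ : Submodule ℂ H))
      = ⟨V₁ (Finsupp.single i 1), LinearMap.mem_range_self V₁ (Finsupp.single i 1)⟩ :=
    Subtype.ext hval.symm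
  rw [h1, h2, hf₀, hV₂def, Finsupp.linearCombination_single, one_smul]

end CuntzAux

theorem PJ_unique_up_to_unitary
    {H H' : Type*} [NormedAddCommGroup H] [InnerProductSpace ℂ H] [CompleteSpace H]
    [NormedAddCommGroup H'] [InnerProductSpace ℂ H'] [CompleteSpace H']
    {N : ℕ} (s : Fin N → H →L[ℂ] H) (s' : Fin N → H' →L[ℂ] H')
    (hs : IsCuntzFamily s) (hs' : IsCuntzFamily s')
    (J : ℕ → Fin N) (Ω : H) (Ω' : H') (hΩ : ‖Ω‖ = 1) (hΩ' : ‖Ω'‖ = 1)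
    (hcyc : IsUHFCyclic s Ω) (hcyc' : IsUHFCyclic s' Ω')
    (hP : PCond s J Ω) (hP' : PCond s' J Ω') :
    ∃ U : H ≃ₗᵢ[ℂ] H', U Ω = Ω' ∧
      ∀ K L : List (Fin N), K.length = L.length →
        ∀ x : H, U ((wordOp s K * star (wordOp s L)) x)
          = (wordOp s' K * star (wordOp s' L)) (U x) := by
  classical
  obtain ⟨A, hA⟩ := CuntzAux.exists_isometry hs hs' J hΩ hΩ' hcyc hP hP'
  have hAgen : ∀ (M P : List (Fin N)), M.length = P.length →
      A ((wordOp s M * star (wordOp s P)) Ω) = (wordOp s' M * star (wordOp s' P)) Ω' :=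
    fun M P h => hA ⟨(M, P), h⟩
  have hsurj : Function.Surjective A := by
    have hclosed : IsClosed (Set.range A) := A.isometry.isClosedEmbedding.isClosed_range
    have hle : UHFSpan s' Ω' ≤ LinearMap.range A.toLinearMap := by
      apply Submodule.topologicalClosure_minimal
      · rw [Submodule.span_le]
        rintro x ⟨K, L, hKL, rfl⟩
        exact ⟨(wordOp s K * star (wordOp s L)) Ω, hAgen K L hKL⟩
      · show IsClosed ((LinearMap.range A.toLinearMap : Submodule ℂ H') : Set H')
        rw [LinearMap.coe_range]
        exact hclosed
    intro y
    have hy : y ∈ LinearMap.range A.toLinearMap := hle (by rw [hcyc']; trivial)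
    obtain ⟨x, hx⟩ := hy
    exact ⟨x, hx⟩
  refine ⟨LinearIsometryEquiv.ofSurjective A hsurj, ?_, ?_⟩
  · have h0 := hAgen [] [] rfl
    simp only [wordOp, star_one, mul_one, ContinuousLinearMap.one_apply] at h0
    rw [LinearIsometryEquiv.coe_ofSurjective]
    exact h0
  · intro K L hKL x
    have hdense2 : Dense ((Submodule.span ℂ {x : H | ∃ K L : List (Fin N),
        K.length = L.length ∧ x = (wordOp s K * star (wordOp s L)) Ω}) : Set H) :=
      Submodule.dense_iff_topologicalClosure_eq_top.mpr hcyc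
    have hcomp : (A.toContinuousLinearMap.comp (wordOp s K * star (wordOp s L)))
        = (wordOp s' K * star (wordOp s' L)).comp A.toContinuousLinearMap := by
      apply ContinuousLinearMap.ext_on hdense2
      rintro x ⟨M, P, hMP, rfl⟩
      simp only [ContinuousLinearMap.comp_apply, LinearIsometry.coe_toContinuousLinearMap]
      rw [hAgen M P hMP, ← ContinuousLinearMap.mul_apply,
        ← ContinuousLinearMap.mul_apply (wordOp s' K * star (wordOp s' L)),
        CuntzAux.op_mul_gen hs K L M P, CuntzAux.op_mul_gen hs' K L M P]
      split_ifs with h1 h2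
      · exact hAgen _ _ (by
          have hl := h1.length_le
          simp only [List.length_append, List.length_drop]
          omega)
      · exact hAgen _ _ (by
          have hl := h2.length_le
          simp only [List.length_append, List.length_drop]
          omega)
      · simp
    have h3 := ContinuousLinearMap.ext_iff.mp hcomp x
    simp only [ContinuousLinearMap.comp_apply,
      LinearIsometry.coe_toContinuousLinearMap] at h3
    rw [LinearIsometryEquiv.coe_ofSurjective]
    exact h3
end
end

section
/- Let (s_1, s_2) be a Cuntz family of order 2 on a complex Hilbert space H with a cyclic unit vector Ω satisfying s_1 s_2 Ω = Ω and ⟨Ω, s_2 Ω⟩ = 0 (so the representation is P(12)). Define t_1 := s_1 s_2 s_1^* + s_1 s_1 s_2^* and t_2 := s_2 (the images of the generators under the permutative endomorphism ψ_{(12)}); then (t_1, t_2) is again a Cuntz family. Let V_1 := the closed linear span of {s_K s_L^* Ω : |K| = |L|} and V_2 := the closed linear span of {s_K s_L^* s_2 Ω : |K| = |L|}. Then: V_1 is the orthogonal direct sum of W_1 := the closed linear span of {t_K t_L^* Ω : |K| = |L|} and W_2 := the closed linear span of {t_K t_L^* s_2 s_2 Ω : |K| = |L|}, where Ω satisfies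 the P[(1,1,2,2)]-condition with respect to (t_1, t_2) and s_2 s_2 Ω satisfies the P[(2,2,1,1)]-condition with respect to (t_1, t_2); and V_2 is the orthogonal direct sum of the closed linear span of {t_K t_L^* s_2 Ω : |K| = |L|} and the closed linear span of {t_K t_L^* s_1 Ω : |K| = |L|}, where s_2 Ω satisfies the P[(2,1,1,2)]-condition and s_1 Ω satisfies the P[(1,2,2,1)]-condition with respect to (t_1, t_2). That is, P[12]∘ψ_{(12)} = P[1122] ⊕ P[2211] and P[21]∘ψ_{(12)} = P[2112] ⊕ P[1221]. -/
noncomputable section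

def IsCyclicVec {H : Type*} [NormedAddCommGroup H] [InnerProductSpace ℂ H]
    [CompleteSpace H] {N : ℕ} (s : Fin N → H →L[ℂ] H) (Ω : H) : Prop :=
  ∀ W : Submodule ℂ H, IsClosed (W : Set H) → Ω ∈ W →
    (∀ i, ∀ x ∈ W, s i x ∈ W ∧ star (s i) x ∈ W) → W = ⊤

section Aux
variable {H : Type*} [NormedAddCommGroup H] [InnerProductSpace ℂ H] [CompleteSpace H]
variable {N : ℕ}

lemma wordOp_nil (u : Fin N → H →L[ℂ] H) : wordOp u [] = 1 := rfl
lemma wordOp_cons (u : Fin N → H →L[ℂ] H) (a : Fin N) (A : List (Fin N)) :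
    wordOp u (a :: A) = u a * wordOp u A := rfl

lemma wordOp_append (u : Fin N → H →L[ℂ] H) (A B : List (Fin N)) :
    wordOp u (A ++ B) = wordOp u A * wordOp u B := by
  induction A with
  | nil => simp [wordOp]
  | cons a A ih => simp [wordOp, ih, mul_assoc]

lemma wordOp_isom {u : Fin N → H →L[ℂ] H} (hu : IsCuntzFamily u) (A : List (Fin N)) :
    star (wordOp u A) * wordOp u A = 1 := by
  induction A with
  | nil => simp [wordOp]
  | cons a A ih =>
      rw [wordOp_cons, star_mul, mul_assoc, ← mul_assoc (star (u a)), hu.1 a a, if_pos rfl,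
        one_mul, ih]

lemma wordOp_pair {u : Fin N → H →L[ℂ] H} (hu : IsCuntzFamily u) :
    ∀ (A B : List (Fin N)), A.length = B.length →
      star (wordOp u A) * wordOp u B = if A = B then 1 else 0 := by
  intro A
  induction A with
  | nil =>
      intro B hB
      have : B = [] := by simpa using (List.length_eq_zero_iff.mp hB.symm)
      subst this; simp [wordOp]
  | cons a A ih =>
      intro B hB
      cases B with
      | nil => simp at hB
      | cons b B =>
          have hlen : A.length = B.length := by simpa using hB
          rw [wordOp_cons, wordOp_cons, star_mul, mul_assoc, ← mul_assoc (star (u a)),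
            hu.1 a b]
          by_cases hab : a = b
          · subst hab
            rw [if_pos rfl, one_mul, ih B hlen]
            by_cases hAB : A = B
            · subst hAB; simp
            · simp [hAB]
          · rw [if_neg hab, zero_mul, mul_zero, if_neg (by simp [hab])]

end Aux

section Cycle
variable {H : Type*} [NormedAddCommGroup H] [InnerProductSpace ℂ H] [CompleteSpace H]
variable {N : ℕ}

/-- the finite word `w_a w_{a+1} … w_{a+n-1}`. -/
def cword (w : ℕ → Fin N) (a n : ℕ) : List (Fin N) := List.ofFn fun i : Fin n => w (a + i)

lemma cword_length (w : ℕ → Fin N) (a n : ℕ) : (cword w a n).length = n := by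
  simp [cword]

lemma cword_succ (w : ℕ → Fin N) (a n : ℕ) :
    cword w a (n + 1) = cword w a n ++ [w (a + n)] := by
  unfold cword
  rw [List.ofFn_succ']
  simp [List.concat_eq_append]

lemma cword_zero (w : ℕ → Fin N) (n : ℕ) :
    (List.ofFn fun k : Fin n => w k) = cword w 0 n := by
  unfold cword
  congr 1
  funext i
  rw [Nat.zero_add]

variable {u : Fin N → H →L[ℂ] H} {w : ℕ → Fin N} {c : ℕ → H}

lemma cycle_word (hc : ∀ k, u (w k) (c (k + 1)) = c k) (a n : ℕ) :
    wordOp u (cword w a n) (c (a + n)) = c a := by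
  induction n with
  | zero => simp [cword, wordOp]
  | succ n ih =>
      rw [cword_succ, wordOp_append, ContinuousLinearMap.mul_apply]
      have h1 : wordOp u [w (a + n)] (c (a + (n + 1))) = c (a + n) := by
        rw [wordOp_cons, wordOp_nil, mul_one, ← Nat.add_assoc]
        exact hc (a + n)
      rw [h1, ih]

lemma star_cycle (hu : IsCuntzFamily u) (hc : ∀ k, u (w k) (c (k + 1)) = c k) (a n : ℕ) :
    (star (wordOp u (cword w a n))) (c a) = c (a + n) := by
  conv_lhs => rw [← cycle_word hc a n]
  rw [← ContinuousLinearMap.mul_apply, wordOp_isom hu, ContinuousLinearMap.one_apply]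

lemma red (hu : IsCuntzFamily u) (hc : ∀ k, u (w k) (c (k + 1)) = c k)
    (K L : List (Fin N)) (a : ℕ) :
    (wordOp u K * star (wordOp u L)) (c a) =
      if L = cword w a L.length then wordOp u K (c (a + L.length)) else 0 := by
  rw [ContinuousLinearMap.mul_apply]
  have h0 : (star (wordOp u L)) (c a) =
      if L = cword w a L.length then c (a + L.length) else 0 := by
    conv_lhs => rw [← cycle_word hc a L.length]
    rw [← ContinuousLinearMap.mul_apply,
      wordOp_pair hu L _ (by rw [cword_length])]
    split <;> simp
  rw [h0]
  split <;> simp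

lemma pcond_of_cycle (hu : IsCuntzFamily u) (hc : ∀ k, u (w k) (c (k + 1)) = c k) :
    PCond u w (c 0) := by
  intro n
  rw [cword_zero, ContinuousLinearMap.mul_apply, star_cycle hu hc 0 n, cycle_word hc 0 n]

lemma mem_UHFSpan_gen (u : Fin N → H →L[ℂ] H) (v : H) (K L : List (Fin N))
    (h : K.length = L.length) : (wordOp u K * star (wordOp u L)) v ∈ UHFSpan u v :=
  Submodule.le_topologicalClosure _ (Submodule.subset_span ⟨K, L, h, rfl⟩)

lemma wordOp_mem_UHFSpan (hu : IsCuntzFamily u) (hc : ∀ k, u (w k) (c (k + 1)) = c k)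
    (K : List (Fin N)) (a : ℕ) (h : c (a + K.length) = c a) :
    wordOp u K (c a) ∈ UHFSpan u (c a) := by
  have h1 : (star (wordOp u (cword w a K.length))) (c a) = c a := by
    rw [star_cycle hu hc a K.length, h]
  have h2 : wordOp u K (c a) = (wordOp u K * star (wordOp u (cword w a K.length))) (c a) := by
    rw [ContinuousLinearMap.mul_apply, h1]
  rw [h2]
  exact mem_UHFSpan_gen u _ K _ (by rw [cword_length])

end Cycle

section Ortho
variable {H : Type*} [NormedAddCommGroup H] [InnerProductSpace ℂ H] [CompleteSpace H]

lemma inner_span_closure_eq_zero {S1 S2 : Set H}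
    (h : ∀ a ∈ S1, ∀ b ∈ S2, (inner ℂ a b : ℂ) = 0) :
    ∀ x ∈ (Submodule.span ℂ S1).topologicalClosure,
      ∀ y ∈ (Submodule.span ℂ S2).topologicalClosure, (inner ℂ x y : ℂ) = 0 := by
  have step1 : ∀ a ∈ S1, ∀ y ∈ Submodule.span ℂ S2, (inner ℂ a y : ℂ) = 0 := by
    intro a ha y hy
    induction hy using Submodule.span_induction with
    | mem b hb => exact h a ha b hb
    | zero => exact inner_zero_right a
    | add y z _ _ hy hz => rw [inner_add_right, hy, hz, add_zero]
    | smul r y _ hy => rw [inner_smul_right, hy, mul_zero]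
  have step2 : ∀ a ∈ S1, ∀ y ∈ (Submodule.span ℂ S2).topologicalClosure,
      (inner ℂ a y : ℂ) = 0 := by
    intro a ha y hy
    have hcl : IsClosed {y : H | (inner ℂ a y : ℂ) = 0} :=
      isClosed_eq (continuous_const.inner continuous_id) continuous_const
    have := closure_minimal (fun y hy => step1 a ha y hy) hcl
    exact this (by rw [← Submodule.topologicalClosure_coe]; exact hy)
  have step3 : ∀ y ∈ (Submodule.span ℂ S2).topologicalClosure,
      ∀ x ∈ Submodule.span ℂ S1, (inner ℂ x y : ℂ) = 0 := by
    intro y hy x hx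
    induction hx using Submodule.span_induction with
    | mem b hb => exact step2 b hb y hy
    | zero => exact inner_zero_left y
    | add x z _ _ hx hz => rw [inner_add_left, hx, hz, add_zero]
    | smul r x _ hx => rw [inner_smul_left, hx, mul_zero]
  intro x hx y hy
  have hcl : IsClosed {x : H | (inner ℂ x y : ℂ) = 0} :=
    isClosed_eq (continuous_id.inner continuous_const) continuous_const
  have := closure_minimal (fun x hx => step3 y hy x hx) hcl
  exact this (by rw [← Submodule.topologicalClosure_coe]; exact hx)

lemma isClosed_sup_orth {U V : Submodule ℂ H} (hU : IsClosed (U : Set H))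
    (h : ∀ u ∈ U, ∀ v ∈ V, (inner ℂ u v : ℂ) = 0) (hV : IsClosed (V : Set H)) :
    IsClosed ((U ⊔ V : Submodule ℂ H) : Set H) := by
  haveI : CompleteSpace U := hU.completeSpace_coe
  have hVU : V ≤ Uᗮ := by
    intro v hv
    rw [Submodule.mem_orthogonal]
    intro u hu
    exact h u hu v hv
  have hset : ((U ⊔ V : Submodule ℂ H) : Set H) =
      (fun x : H => x - (U.subtypeL.comp (U.orthogonalProjectionOnto)) x) ⁻¹' (V : Set H) := by
    ext x
    simp only [Set.mem_preimage, SetLike.mem_coe, ContinuousLinearMap.comp_apply,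
      Submodule.subtypeL_apply]
    constructor
    · intro hx
      obtain ⟨u, hu, v, hv, rfl⟩ := Submodule.mem_sup.mp hx
      have h1 : ((U.orthogonalProjectionOnto (u + v)) : H) = u := by
        rw [map_add, Submodule.orthogonalProjectionOnto_apply_of_mem_orthogonal (hVU hv),
          add_zero]
        exact congrArg Subtype.val (U.orthogonalProjectionOnto_mem_subspace_eq_self ⟨u, hu⟩)
      rw [h1]
      simpa using hv
    · intro hx
      have : x = ((U.orthogonalProjectionOnto x : H)) + (x - (U.orthogonalProjectionOnto x : H)) := by
        abel
      rw [this]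
      exact Submodule.mem_sup.mpr ⟨_, (U.orthogonalProjectionOnto x).2, _, hx, rfl⟩
  rw [hset]
  exact hV.preimage (continuous_id.sub (U.subtypeL.comp (U.orthogonalProjectionOnto)).continuous)

end Ortho

section Main
variable {H : Type*} [NormedAddCommGroup H] [InnerProductSpace ℂ H] [CompleteSpace H]

/-- the periodic word `(0011)^∞`. -/
def wcyc : ℕ → Fin 2 := fun n => (![0, 0, 1, 1] : Fin 4 → Fin 2) ⟨n % 4, Nat.mod_lt _ (by norm_num)⟩
/-- the periodic word `(01)^∞`. -/
def wsc : ℕ → Fin 2 := fun n => (![0, 1] : Fin 2 → Fin 2) ⟨n % 2, by omega⟩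

lemma wcyc_congr {m n : ℕ} (h : m % 4 = n % 4) : wcyc m = wcyc n := by
  unfold wcyc; congr 1; exact Fin.mk.injEq .. ▸ h

lemma wsc_congr {m n : ℕ} (h : m % 2 = n % 2) : wsc m = wsc n := by
  unfold wsc; congr 1; exact Fin.mk.injEq .. ▸ h

/-- the cycle of vectors `Ω, s₁Ω, s₂s₂Ω, s₂Ω` (0-indexed operators). -/
def cvec (s : Fin 2 → H →L[ℂ] H) (Ω : H) : ℕ → H :=
  fun n => ![Ω, s 0 Ω, (s 1 * s 1) Ω, s 1 Ω] ⟨n % 4, Nat.mod_lt _ (by norm_num)⟩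

def svec (s : Fin 2 → H →L[ℂ] H) (Ω : H) : ℕ → H :=
  fun n => ![Ω, s 1 Ω] ⟨n % 2, by omega⟩

omit [CompleteSpace H] in
lemma cvec_congr (s : Fin 2 → H →L[ℂ] H) (Ω : H) {m n : ℕ} (h : m % 4 = n % 4) :
    cvec s Ω m = cvec s Ω n := by
  unfold cvec; congr 1; exact Fin.mk.injEq .. ▸ h

omit [CompleteSpace H] in
lemma svec_congr (s : Fin 2 → H →L[ℂ] H) (Ω : H) {m n : ℕ} (h : m % 2 = n % 2) :
    svec s Ω m = svec s Ω n := by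
  unfold svec; congr 1; exact Fin.mk.injEq .. ▸ h

variable {s t : Fin 2 → H →L[ℂ] H} {Ω : H}

lemma hss00 (hs : IsCuntzFamily s) : star (s 0) * s 0 = 1 := by
  have := hs.1 0 0; rwa [if_pos rfl] at this
lemma hss01 (hs : IsCuntzFamily s) : star (s 0) * s 1 = 0 := by
  have := hs.1 0 1; rwa [if_neg (by decide)] at this
lemma hss10 (hs : IsCuntzFamily s) : star (s 1) * s 0 = 0 := by
  have := hs.1 1 0; rwa [if_neg (by decide)] at this
lemma hss11 (hs : IsCuntzFamily s) : star (s 1) * s 1 = 1 := by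
  have := hs.1 1 1; rwa [if_pos rfl] at this

lemma hsum (hs : IsCuntzFamily s) : s 0 * star (s 0) + s 1 * star (s 1) = 1 := by
  have := hs.2; rwa [Fin.sum_univ_two] at this

lemma c00 (hs : IsCuntzFamily s) : ∀ x : H →L[ℂ] H, star (s 0) * (s 0 * x) = x := fun x => by
  rw [← mul_assoc, hss00 hs, one_mul]
lemma c01 (hs : IsCuntzFamily s) : ∀ x : H →L[ℂ] H, star (s 0) * (s 1 * x) = 0 := fun x => by
  rw [← mul_assoc, hss01 hs, zero_mul]
lemma c10 (hs : IsCuntzFamily s) : ∀ x : H →L[ℂ] H, star (s 1) * (s 0 * x) = 0 := fun x => by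
  rw [← mul_assoc, hss10 hs, zero_mul]
lemma c11 (hs : IsCuntzFamily s) : ∀ x : H →L[ℂ] H, star (s 1) * (s 1 * x) = x := fun x => by
  rw [← mul_assoc, hss11 hs, one_mul]

variable (hs : IsCuntzFamily s)
  (ht0 : t 0 = s 0 * s 1 * star (s 0) + s 0 * s 0 * star (s 1)) (ht1 : t 1 = s 1)

section TRel
include hs ht0 ht1

lemma L1 : t 0 * s 0 = s 0 * s 1 := by
  rw [ht0, add_mul, mul_assoc (s 0 * s 1), mul_assoc (s 0 * s 0), hss00 hs, hss10 hs,
    mul_one, mul_zero, add_zero]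

lemma L2 : t 0 * s 1 = s 0 * s 0 := by
  rw [ht0, add_mul, mul_assoc (s 0 * s 1), mul_assoc (s 0 * s 0), hss01 hs, hss11 hs,
    mul_one, mul_zero, zero_add]

lemma tCuntz : IsCuntzFamily t := by
  have e00 : star (t 0) * t 0 = 1 := by
    simp only [ht0, star_add, star_mul, star_star, mul_add, add_mul, mul_assoc,
      c00 hs, c01 hs, c10 hs, c11 hs, hss00 hs, hss01 hs, hss10 hs, hss11 hs,
      mul_zero, zero_mul, mul_one, one_mul, add_zero, zero_add]
    exact hsum hs
  have e01 : star (t 0) * t 1 = 0 := by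
    simp only [ht0, ht1, star_add, star_mul, star_star, mul_add, add_mul, mul_assoc,
      c00 hs, c01 hs, c10 hs, c11 hs, hss00 hs, hss01 hs, hss10 hs, hss11 hs,
      mul_zero, zero_mul, mul_one, one_mul, add_zero, zero_add]
  have e10 : star (t 1) * t 0 = 0 := by
    simp only [ht0, ht1, star_add, star_mul, star_star, mul_add, add_mul, mul_assoc,
      c00 hs, c01 hs, c10 hs, c11 hs, hss00 hs, hss01 hs, hss10 hs, hss11 hs,
      mul_zero, zero_mul, mul_one, one_mul, add_zero, zero_add]
  have e11 : star (t 1) * t 1 = 1 := by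
    rw [ht1, hss11 hs]
  constructor
  · rw [Fin.forall_fin_two]
    constructor <;> rw [Fin.forall_fin_two] <;> constructor
    · rw [e00, if_pos rfl]
    · rw [e01, if_neg (by decide)]
    · rw [e10, if_neg (by decide)]
    · rw [e11, if_pos rfl]
  · rw [Fin.sum_univ_two]
    have f00 : t 0 * star (t 0) = s 0 * star (s 0) := by
      simp only [ht0, star_add, star_mul, star_star, mul_add, add_mul, mul_assoc,
        c00 hs, c01 hs, c10 hs, c11 hs, mul_zero, zero_mul, mul_one, one_mul,
        add_zero, zero_add]
      have h1 : s 1 * (star (s 1) * star (s 0)) + s 0 * (star (s 0) * star (s 0))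
          = star (s 0) := by
        rw [← mul_assoc, ← mul_assoc, ← add_mul, add_comm, hsum hs, one_mul]
      rw [← mul_add, h1]
    rw [f00, ht1, hsum hs]

end TRel

section Vec
variable (hfix : (s 0 * s 1) Ω = Ω)
include hs ht0 ht1 hfix

lemma hstep : ∀ k, t (wcyc k) (cvec s Ω (k + 1)) = cvec s Ω k := by
  have b0 : t 0 (s 0 Ω) = Ω := by
    rw [← ContinuousLinearMap.mul_apply, L1 hs ht0 ht1, hfix]
  have b1 : t 0 ((s 1 * s 1) Ω) = s 0 Ω := by
    rw [ContinuousLinearMap.mul_apply, ← ContinuousLinearMap.mul_apply (t 0), L2 hs ht0 ht1,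
      ContinuousLinearMap.mul_apply, ← ContinuousLinearMap.mul_apply (s 0) (s 1), hfix]
  have b2 : t 1 (s 1 Ω) = (s 1 * s 1) Ω := by
    rw [ht1, ContinuousLinearMap.mul_apply]
  have b3 : t 1 Ω = s 1 Ω := by rw [ht1]
  intro k
  rcases (by omega : k % 4 = 0 ∨ k % 4 = 1 ∨ k % 4 = 2 ∨ k % 4 = 3) with h | h | h | h
  · rw [wcyc_congr (show k % 4 = 0 % 4 by omega),
      cvec_congr s Ω (show (k + 1) % 4 = 1 % 4 by omega),
      cvec_congr s Ω (show k % 4 = 0 % 4 by omega)]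
    exact b0
  · rw [wcyc_congr (show k % 4 = 1 % 4 by omega),
      cvec_congr s Ω (show (k + 1) % 4 = 2 % 4 by omega),
      cvec_congr s Ω (show k % 4 = 1 % 4 by omega)]
    exact b1
  · rw [wcyc_congr (show k % 4 = 2 % 4 by omega),
      cvec_congr s Ω (show (k + 1) % 4 = 3 % 4 by omega),
      cvec_congr s Ω (show k % 4 = 2 % 4 by omega)]
    exact b2
  · rw [wcyc_congr (show k % 4 = 3 % 4 by omega),
      cvec_congr s Ω (show (k + 1) % 4 = 0 % 4 by omega),
      cvec_congr s Ω (show k % 4 = 3 % 4 by omega)]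
    exact b3

lemma hstep_shift (a : ℕ) :
    ∀ k, t (wcyc (a + k)) (cvec s Ω (a + (k + 1))) = cvec s Ω (a + k) := by
  intro k
  have := hstep hs ht0 ht1 hfix (a + k)
  rwa [Nat.add_assoc] at this

omit ht0 ht1 in
lemma sstep : ∀ k, s (wsc k) (svec s Ω (k + 1)) = svec s Ω k := by
  intro k
  rcases (by omega : k % 2 = 0 ∨ k % 2 = 1) with h | h
  · rw [wsc_congr (show k % 2 = 0 % 2 by omega),
      svec_congr s Ω (show (k + 1) % 2 = 1 % 2 by omega),
      svec_congr s Ω (show k % 2 = 0 % 2 by omega)]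
    show s 0 (s 1 Ω) = Ω
    rw [← ContinuousLinearMap.mul_apply, hfix]
  · rw [wsc_congr (show k % 2 = 1 % 2 by omega),
      svec_congr s Ω (show (k + 1) % 2 = 0 % 2 by omega),
      svec_congr s Ω (show k % 2 = 1 % 2 by omega)]
    rfl

omit ht0 ht1 in
lemma sstep_shift (a : ℕ) :
    ∀ k, s (wsc (a + k)) (svec s Ω (a + (k + 1))) = svec s Ω (a + k) := by
  intro k
  have := sstep hs hfix (a + k)
  rwa [Nat.add_assoc] at this


omit ht0 ht1 in
lemma hfixa : s 0 (s 1 Ω) = Ω := by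
  rw [← ContinuousLinearMap.mul_apply, hfix]

omit hfix in
lemma A1 : ∀ x : H, t 0 (s 0 x) = s 0 (s 1 x) := fun x => by
  rw [← ContinuousLinearMap.mul_apply, L1 hs ht0 ht1, ContinuousLinearMap.mul_apply]

omit hfix in
lemma A2 : ∀ x : H, t 0 (s 1 x) = s 0 (s 0 x) := fun x => by
  rw [← ContinuousLinearMap.mul_apply, L2 hs ht0 ht1, ContinuousLinearMap.mul_apply]

omit hs ht0 hfix in
lemma A3 : ∀ x : H, t 1 x = s 1 x := fun x => by rw [ht1]

lemma tstep : ∀ (i : Fin 2) (D : List (Fin 2)), ∃ D' : List (Fin 2),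
    t i (wordOp s D Ω) = wordOp s D' Ω ∧ D'.length % 2 = (D.length + 1) % 2 := by
  intro i D
  have hi := i.isLt
  rcases (by omega : (i : ℕ) = 0 ∨ (i : ℕ) = 1) with h | h
  · replace h : i = 0 := Fin.ext h
    subst h
    cases D with
    | nil =>
        refine ⟨[0, 1, 1], ?_, by simp⟩
        show t 0 Ω = wordOp s [0, 1, 1] Ω
        conv_lhs => rw [← hfixa hs hfix]
        rw [A1 hs ht0 ht1]
        simp [wordOp_cons, wordOp_nil, ContinuousLinearMap.mul_apply]
    | cons d D'' =>
        have hd := d.isLt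
        rcases (by omega : (d : ℕ) = 0 ∨ (d : ℕ) = 1) with h | h
        · replace h : d = 0 := Fin.ext h
          subst h
          refine ⟨0 :: 1 :: D'', ?_, by simp [Nat.add_mod]⟩
          simp only [wordOp_cons, ContinuousLinearMap.mul_apply]
          rw [A1 hs ht0 ht1]
        · replace h : d = 1 := Fin.ext h
          subst h
          refine ⟨0 :: 0 :: D'', ?_, by simp [Nat.add_mod]⟩
          simp only [wordOp_cons, ContinuousLinearMap.mul_apply]
          rw [A2 hs ht0 ht1]
  · replace h : i = 1 := Fin.ext h
    subst h
    refine ⟨1 :: D, ?_, by simp⟩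
    simp only [wordOp_cons, ContinuousLinearMap.mul_apply]
    rw [A3 ht1]

omit hs ht0 ht1 hfix in
lemma crep : ∀ a : ℕ, ∃ R : List (Fin 2),
    cvec s Ω a = wordOp s R Ω ∧ R.length % 2 = a % 2 := by
  intro a
  rcases (by omega : a % 4 = 0 ∨ a % 4 = 1 ∨ a % 4 = 2 ∨ a % 4 = 3) with h | h | h | h <;>
    rw [cvec_congr s Ω (show a % 4 = (a % 4) % 4 by omega), h]
  · exact ⟨[], rfl, by simp; omega⟩
  · exact ⟨[0], by simp [wordOp_cons, wordOp_nil]; rfl, by simp; omega⟩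
  · exact ⟨[1, 1], by simp [wordOp_cons, wordOp_nil, ContinuousLinearMap.mul_apply]; rfl,
      by simp; omega⟩
  · exact ⟨[1], by simp [wordOp_cons, wordOp_nil]; rfl, by simp; omega⟩

lemma forward : ∀ (K : List (Fin 2)) (a : ℕ), ∃ D : List (Fin 2),
    wordOp t K (cvec s Ω a) = wordOp s D Ω ∧ D.length % 2 = (K.length + a) % 2 := by
  intro K
  induction K with
  | nil =>
      intro a
      obtain ⟨R, hR, hRl⟩ := crep (s := s) (Ω := Ω) a
      exact ⟨R, by simpa [wordOp_nil] using hR, by simp; omega⟩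
  | cons i K ih =>
      intro a
      obtain ⟨D, hD, hDl⟩ := ih a
      obtain ⟨D', hD', hD'l⟩ := tstep hs ht0 ht1 hfix i D
      refine ⟨D', ?_, by simp [List.length_cons]; omega⟩
      rw [wordOp_cons, ContinuousLinearMap.mul_apply, hD, hD']

lemma backward : ∀ C : List (Fin 2), ∃ (Q : List (Fin 2)) (a : ℕ),
    wordOp s C Ω = wordOp t Q (cvec s Ω a) ∧ (a + Q.length + C.length) % 2 = 0 := by
  have main : ∀ (n : ℕ) (C : List (Fin 2)), C.length ≤ n → ∃ (Q : List (Fin 2)) (a : ℕ),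
      wordOp s C Ω = wordOp t Q (cvec s Ω a) ∧ (a + Q.length + C.length) % 2 = 0 := by
    intro n
    induction n with
    | zero =>
        intro C hC
        have : C = [] := List.length_eq_zero_iff.mp (by omega)
        subst this
        exact ⟨[], 0, rfl, by simp⟩
    | succ n ih =>
        intro C hC
        cases C with
        | nil => exact ⟨[], 0, rfl, by simp⟩
        | cons i C' =>
            have hi := i.isLt
            rcases (by omega : (i : ℕ) = 0 ∨ (i : ℕ) = 1) with h | h
            · replace h : i = 0 := Fin.ext h
              subst h
              cases C' with
              | nil =>
                  refine ⟨[], 1, ?_, by simp⟩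
                  show wordOp s [0] Ω = cvec s Ω 1
                  simp [wordOp_cons, wordOp_nil]
                  rfl
              | cons d C'' =>
                  have hd := d.isLt
                  rcases (by omega : (d : ℕ) = 0 ∨ (d : ℕ) = 1) with h | h
                  · replace h : d = 0 := Fin.ext h
                    subst h
                    obtain ⟨Q, a, hQ, hQl⟩ := ih (1 :: C'') (by simp at hC ⊢; omega)
                    refine ⟨0 :: Q, a, ?_, by simp at hQl ⊢; omega⟩
                    simp only [wordOp_cons, ContinuousLinearMap.mul_apply] at hQ ⊢
                    rw [← A2 hs ht0 ht1, hQ]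
                  · replace h : d = 1 := Fin.ext h
                    subst h
                    obtain ⟨Q, a, hQ, hQl⟩ := ih (0 :: C'') (by simp at hC ⊢; omega)
                    refine ⟨0 :: Q, a, ?_, by simp at hQl ⊢; omega⟩
                    simp only [wordOp_cons, ContinuousLinearMap.mul_apply] at hQ ⊢
                    rw [← A1 hs ht0 ht1, hQ]
            · replace h : i = 1 := Fin.ext h
              subst h
              obtain ⟨Q, a, hQ, hQl⟩ := ih C' (by simp at hC; omega)
              refine ⟨1 :: Q, a, ?_, by simp at hQl ⊢; omega⟩
              simp only [wordOp_cons, ContinuousLinearMap.mul_apply]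
              rw [A3 ht1, hQ]
  exact fun C => main C.length C le_rfl


lemma memW (P : List (Fin 2)) (b : ℕ) (hP : P.length % 4 = 0) :
    wordOp t P (cvec s Ω b) ∈ UHFSpan t (cvec s Ω b) :=
  wordOp_mem_UHFSpan (tCuntz hs ht0 ht1) (hstep hs ht0 ht1 hfix) P b
    (cvec_congr s Ω (by omega))

omit ht0 ht1 in
lemma memSeven (D : List (Fin 2)) (hD : D.length % 2 = 0) :
    wordOp s D Ω ∈ UHFSpan s Ω :=
  wordOp_mem_UHFSpan hs (sstep hs hfix) D 0 (svec_congr s Ω (by omega))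

omit ht0 ht1 in
lemma memSodd (D : List (Fin 2)) (hD : D.length % 2 = 1) :
    wordOp s D Ω ∈ UHFSpan s (s 1 Ω) := by
  have h1 : wordOp s D Ω = wordOp s (D ++ [0]) (svec s Ω 1) := by
    rw [wordOp_append, ContinuousLinearMap.mul_apply]
    congr 1
    show Ω = wordOp s [0] (svec s Ω 1)
    show Ω = (s 0 * 1) (s 1 Ω)
    rw [mul_one, ← ContinuousLinearMap.mul_apply, hfix]
  rw [h1]
  exact wordOp_mem_UHFSpan hs (sstep hs hfix) (D ++ [0]) 1
    (svec_congr s Ω (by simp; omega))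

lemma ortho_W (r r' : ℕ) (hrr : (inner ℂ (cvec s Ω r) (cvec s Ω r') : ℂ) = 0) :
    ∀ x ∈ UHFSpan t (cvec s Ω r), ∀ y ∈ UHFSpan t (cvec s Ω r'),
      (inner ℂ x y : ℂ) = 0 := by
  have htC := tCuntz hs ht0 ht1
  have hst := hstep hs ht0 ht1 hfix
  apply inner_span_closure_eq_zero
  rintro x ⟨K, L, hKL, rfl⟩ y ⟨M, N, hMN, rfl⟩
  rw [red htC hst K L r, red htC hst M N r']
  split
  case isFalse => rw [inner_zero_left]
  split
  case isFalse => rw [inner_zero_right]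
  set n := L.length with hn
  set n' := N.length with hn'
  set ℓ := 4 * (n + n' + 1) with hℓ
  have hx : wordOp t K (cvec s Ω (r + n)) =
      wordOp t (K ++ cword wcyc (r + n) (ℓ - n)) (cvec s Ω (r + ℓ)) := by
    rw [wordOp_append, ContinuousLinearMap.mul_apply,
      show r + ℓ = (r + n) + (ℓ - n) by omega, cycle_word hst]
  have hy : wordOp t M (cvec s Ω (r' + n')) =
      wordOp t (M ++ cword wcyc (r' + n') (ℓ - n')) (cvec s Ω (r' + ℓ)) := by
    rw [wordOp_append, ContinuousLinearMap.mul_apply,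
      show r' + ℓ = (r' + n') + (ℓ - n') by omega, cycle_word hst]
  rw [hx, hy]
  set P := K ++ cword wcyc (r + n) (ℓ - n) with hP
  set Q := M ++ cword wcyc (r' + n') (ℓ - n') with hQ
  have hPl : P.length = ℓ := by simp [hP, cword_length]; omega
  have hQl : Q.length = ℓ := by simp [hQ, cword_length]; omega
  rw [← ContinuousLinearMap.adjoint_inner_right (wordOp t P),
    ← ContinuousLinearMap.star_eq_adjoint, ← ContinuousLinearMap.mul_apply,
    wordOp_pair htC P Q (by omega)]
  split
  · rw [ContinuousLinearMap.one_apply,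
      cvec_congr s Ω (show (r + ℓ) % 4 = r % 4 by omega),
      cvec_congr s Ω (show (r' + ℓ) % 4 = r' % 4 by omega)]
    exact hrr
  · rw [ContinuousLinearMap.zero_apply, inner_zero_right]

lemma W_le_even (r : ℕ) (hr : r % 2 = 0) : UHFSpan t (cvec s Ω r) ≤ UHFSpan s Ω := by
  refine Submodule.topologicalClosure_minimal _ ?_ (Submodule.isClosed_topologicalClosure _)
  rw [Submodule.span_le]
  rintro x ⟨K, L, hKL, rfl⟩
  rw [SetLike.mem_coe, red (tCuntz hs ht0 ht1) (hstep hs ht0 ht1 hfix) K L r]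
  split
  · obtain ⟨D, hD, hDl⟩ := forward hs ht0 ht1 hfix K (r + L.length)
    rw [hD]
    exact memSeven hs hfix D (by omega)
  · exact Submodule.zero_mem _

lemma W_le_odd (r : ℕ) (hr : r % 2 = 1) : UHFSpan t (cvec s Ω r) ≤ UHFSpan s (s 1 Ω) := by
  refine Submodule.topologicalClosure_minimal _ ?_ (Submodule.isClosed_topologicalClosure _)
  rw [Submodule.span_le]
  rintro x ⟨K, L, hKL, rfl⟩
  rw [SetLike.mem_coe, red (tCuntz hs ht0 ht1) (hstep hs ht0 ht1 hfix) K L r]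
  split
  · obtain ⟨D, hD, hDl⟩ := forward hs ht0 ht1 hfix K (r + L.length)
    rw [hD]
    exact memSodd hs hfix D (by omega)
  · exact Submodule.zero_mem _

omit ht0 ht1 in
lemma hstar1 : (star (s 1)) Ω = 0 := by
  conv_lhs => rw [← hfix]
  rw [← ContinuousLinearMap.mul_apply, ← mul_assoc, hss10 hs, zero_mul,
    ContinuousLinearMap.zero_apply]

omit ht0 ht1 in
lemma h02 : (inner ℂ (cvec s Ω 0) (cvec s Ω 2) : ℂ) = 0 := by
  show (inner ℂ Ω ((s 1 * s 1) Ω) : ℂ) = 0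
  rw [ContinuousLinearMap.mul_apply, ← ContinuousLinearMap.adjoint_inner_left (s 1),
    ← ContinuousLinearMap.star_eq_adjoint, hstar1 hs hfix, inner_zero_left]

omit ht0 ht1 hfix in
lemma h31 : (inner ℂ (cvec s Ω 3) (cvec s Ω 1) : ℂ) = 0 := by
  show (inner ℂ (s 1 Ω) (s 0 Ω) : ℂ) = 0
  rw [← ContinuousLinearMap.adjoint_inner_left (s 0), ← ContinuousLinearMap.star_eq_adjoint,
    ← ContinuousLinearMap.mul_apply, hss01 hs, ContinuousLinearMap.zero_apply,
    inner_zero_left]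

lemma sink_even (C : List (Fin 2)) (hCl : C.length % 2 = 0) :
    wordOp s C Ω ∈ UHFSpan t (cvec s Ω 0) ⊔ UHFSpan t (cvec s Ω 2) := by
  obtain ⟨Q, a, hQ, hQl⟩ := backward hs ht0 ht1 hfix C
  rw [hQ]
  set k := 3 * Q.length + 4 with hk
  have hpad : wordOp t Q (cvec s Ω a) = wordOp t (Q ++ cword wcyc a k) (cvec s Ω (a + k)) := by
    rw [wordOp_append, ContinuousLinearMap.mul_apply, cycle_word (hstep hs ht0 ht1 hfix) a k]
  rw [hpad]
  have hlen : (Q ++ cword wcyc a k).length % 4 = 0 := by simp [cword_length]; omega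
  rcases (by omega : (a + k) % 4 = 0 ∨ (a + k) % 4 = 2) with h | h
  · apply Submodule.mem_sup_left
    rw [show cvec s Ω 0 = cvec s Ω (a + k) from cvec_congr s Ω (by omega)]
    exact memW hs ht0 ht1 hfix (Q ++ cword wcyc a k) (a + k) hlen
  · apply Submodule.mem_sup_right
    rw [show cvec s Ω 2 = cvec s Ω (a + k) from cvec_congr s Ω (by omega)]
    exact memW hs ht0 ht1 hfix (Q ++ cword wcyc a k) (a + k) hlen

lemma sink_odd (C : List (Fin 2)) (hCl : C.length % 2 = 1) :
    wordOp s C Ω ∈ UHFSpan t (cvec s Ω 3) ⊔ UHFSpan t (cvec s Ω 1) := by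
  obtain ⟨Q, a, hQ, hQl⟩ := backward hs ht0 ht1 hfix C
  rw [hQ]
  set k := 3 * Q.length + 4 with hk
  have hpad : wordOp t Q (cvec s Ω a) = wordOp t (Q ++ cword wcyc a k) (cvec s Ω (a + k)) := by
    rw [wordOp_append, ContinuousLinearMap.mul_apply, cycle_word (hstep hs ht0 ht1 hfix) a k]
  rw [hpad]
  have hlen : (Q ++ cword wcyc a k).length % 4 = 0 := by simp [cword_length]; omega
  rcases (by omega : (a + k) % 4 = 3 ∨ (a + k) % 4 = 1) with h | h
  · apply Submodule.mem_sup_left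
    rw [show cvec s Ω 3 = cvec s Ω (a + k) from cvec_congr s Ω (by omega)]
    exact memW hs ht0 ht1 hfix (Q ++ cword wcyc a k) (a + k) hlen
  · apply Submodule.mem_sup_right
    rw [show cvec s Ω 1 = cvec s Ω (a + k) from cvec_congr s Ω (by omega)]
    exact memW hs ht0 ht1 hfix (Q ++ cword wcyc a k) (a + k) hlen

lemma V_le_even : UHFSpan s Ω ≤ UHFSpan t (cvec s Ω 0) ⊔ UHFSpan t (cvec s Ω 2) := by
  refine Submodule.topologicalClosure_minimal _ ?_ ?_
  swap
  · exact isClosed_sup_orth (Submodule.isClosed_topologicalClosure _)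
      (ortho_W hs ht0 ht1 hfix 0 2 (h02 hs hfix)) (Submodule.isClosed_topologicalClosure _)
  rw [Submodule.span_le]
  rintro x ⟨K, L, hKL, rfl⟩
  have hred := red hs (sstep hs hfix) K L 0
  rw [show svec s Ω 0 = Ω from rfl] at hred
  rw [SetLike.mem_coe, hred]
  split
  · rcases (by omega : L.length % 2 = 0 ∨ L.length % 2 = 1) with h | h
    · rw [svec_congr s Ω (show (0 + L.length) % 2 = 0 % 2 by omega),
        show svec s Ω 0 = Ω from rfl]
      exact sink_even hs ht0 ht1 hfix K (by omega)
    · rw [svec_congr s Ω (show (0 + L.length) % 2 = 1 % 2 by omega),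
        show svec s Ω 1 = wordOp s [1] Ω from by
          simp [wordOp_cons, wordOp_nil]; rfl,
        ← ContinuousLinearMap.mul_apply, ← wordOp_append]
      exact sink_even hs ht0 ht1 hfix (K ++ [1]) (by simp; omega)
  · exact Submodule.zero_mem _

lemma V_le_odd : UHFSpan s (s 1 Ω) ≤ UHFSpan t (cvec s Ω 3) ⊔ UHFSpan t (cvec s Ω 1) := by
  refine Submodule.topologicalClosure_minimal _ ?_ ?_
  swap
  · exact isClosed_sup_orth (Submodule.isClosed_topologicalClosure _)
      (ortho_W hs ht0 ht1 hfix 3 1 (h31 hs)) (Submodule.isClosed_topologicalClosure _)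
  rw [Submodule.span_le]
  rintro x ⟨K, L, hKL, rfl⟩
  have hred := red hs (sstep hs hfix) K L 1
  rw [show svec s Ω 1 = s 1 Ω from rfl] at hred
  rw [SetLike.mem_coe, hred]
  split
  · rcases (by omega : L.length % 2 = 0 ∨ L.length % 2 = 1) with h | h
    · rw [svec_congr s Ω (show (1 + L.length) % 2 = 1 % 2 by omega),
        show svec s Ω 1 = wordOp s [1] Ω from by
          simp [wordOp_cons, wordOp_nil]; rfl,
        ← ContinuousLinearMap.mul_apply, ← wordOp_append]
      exact sink_odd hs ht0 ht1 hfix (K ++ [1]) (by simp; omega)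
    · rw [svec_congr s Ω (show (1 + L.length) % 2 = 0 % 2 by omega),
        show svec s Ω 0 = Ω from rfl]
      exact sink_odd hs ht0 ht1 hfix K (by omega)
  · exact Submodule.zero_mem _


lemma pcond_shift (a : ℕ) (w : ℕ → Fin 2) (hw : ∀ k, w k = wcyc (a + k)) :
    PCond t w (cvec s Ω a) := by
  have hc : ∀ k, t (w k) ((fun n => cvec s Ω (a + n)) (k + 1)) =
      (fun n => cvec s Ω (a + n)) k := by
    intro k
    rw [hw k]
    exact hstep_shift hs ht0 ht1 hfix a k
  have := pcond_of_cycle (u := t) (w := w) (c := fun n => cvec s Ω (a + n))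
      (tCuntz hs ht0 ht1) hc
  simpa using this

end Vec

def wA : ℕ → Fin 2 := fun n => (![1, 1, 0, 0] : Fin 4 → Fin 2) ⟨n % 4, Nat.mod_lt _ (by norm_num)⟩
def wB : ℕ → Fin 2 := fun n => (![1, 0, 0, 1] : Fin 4 → Fin 2) ⟨n % 4, Nat.mod_lt _ (by norm_num)⟩
def wC : ℕ → Fin 2 := fun n => (![0, 1, 1, 0] : Fin 4 → Fin 2) ⟨n % 4, Nat.mod_lt _ (by norm_num)⟩

lemma wA_congr {m n : ℕ} (h : m % 4 = n % 4) : wA m = wA n := by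
  unfold wA; congr 1; exact Fin.mk.injEq .. ▸ h
lemma wB_congr {m n : ℕ} (h : m % 4 = n % 4) : wB m = wB n := by
  unfold wB; congr 1; exact Fin.mk.injEq .. ▸ h
lemma wC_congr {m n : ℕ} (h : m % 4 = n % 4) : wC m = wC n := by
  unfold wC; congr 1; exact Fin.mk.injEq .. ▸ h

lemma wA_eq : ∀ k, wA k = wcyc (2 + k) := by
  intro k
  rcases (by omega : k % 4 = 0 ∨ k % 4 = 1 ∨ k % 4 = 2 ∨ k % 4 = 3) with h | h | h | h <;>
    rw [wA_congr (show k % 4 = (k % 4) % 4 by omega),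
      wcyc_congr (show (2 + k) % 4 = (2 + k % 4) % 4 by omega), h] <;> rfl

lemma wB_eq : ∀ k, wB k = wcyc (3 + k) := by
  intro k
  rcases (by omega : k % 4 = 0 ∨ k % 4 = 1 ∨ k % 4 = 2 ∨ k % 4 = 3) with h | h | h | h <;>
    rw [wB_congr (show k % 4 = (k % 4) % 4 by omega),
      wcyc_congr (show (3 + k) % 4 = (3 + k % 4) % 4 by omega), h] <;> rfl

lemma wC_eq : ∀ k, wC k = wcyc (1 + k) := by
  intro k
  rcases (by omega : k % 4 = 0 ∨ k % 4 = 1 ∨ k % 4 = 2 ∨ k % 4 = 3) with h | h | h | h <;>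
    rw [wC_congr (show k % 4 = (k % 4) % 4 by omega),
      wcyc_congr (show (1 + k) % 4 = (1 + k % 4) % 4 by omega), h] <;> rfl

end Main


theorem P12_branching_psi12
    {H : Type*} [NormedAddCommGroup H] [InnerProductSpace ℂ H] [CompleteSpace H]
    (s : Fin 2 → H →L[ℂ] H) (hs : IsCuntzFamily s)
    (Ω : H) (hΩ : ‖Ω‖ = 1) (hcyc : IsCyclicVec s Ω)
    (hfix : (s 0 * s 1) Ω = Ω) (horth : (inner ℂ Ω (s 1 Ω) : ℂ) = 0)
    (t : Fin 2 → H →L[ℂ] H)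
    (ht0 : t 0 = s 0 * s 1 * star (s 0) + s 0 * s 0 * star (s 1))
    (ht1 : t 1 = s 1) :
    -- `(t_1, t_2)` is again a Cuntz family
    IsCuntzFamily t
    -- `V_1 = W_1 ⊕ W_2`
    ∧ (∀ x ∈ UHFSpan t Ω, ∀ y ∈ UHFSpan t ((s 1 * s 1) Ω), (inner ℂ x y : ℂ) = 0)
    ∧ UHFSpan s Ω = UHFSpan t Ω ⊔ UHFSpan t ((s 1 * s 1) Ω)
    -- `Ω` satisfies `P[(1,1,2,2)]` and `s_2 s_2 Ω` satisfies `P[(2,2,1,1)]` w.r.t. `t`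
    ∧ PCond t (fun n => (![0, 0, 1, 1] : Fin 4 → Fin 2) ⟨n % 4, by omega⟩) Ω
    ∧ PCond t (fun n => (![1, 1, 0, 0] : Fin 4 → Fin 2) ⟨n % 4, by omega⟩) ((s 1 * s 1) Ω)
    -- `V_2` decomposes similarly
    ∧ (∀ x ∈ UHFSpan t (s 1 Ω), ∀ y ∈ UHFSpan t (s 0 Ω), (inner ℂ x y : ℂ) = 0)
    ∧ UHFSpan s (s 1 Ω) = UHFSpan t (s 1 Ω) ⊔ UHFSpan t (s 0 Ω)
    -- `s_2 Ω` satisfies `P[(2,1,1,2)]` and `s_1 Ω` satisfies `P[(1,2,2,1)]` w.r.t. `t`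
    ∧ PCond t (fun n => (![1, 0, 0, 1] : Fin 4 → Fin 2) ⟨n % 4, by omega⟩) (s 1 Ω)
    ∧ PCond t (fun n => (![0, 1, 1, 0] : Fin 4 → Fin 2) ⟨n % 4, by omega⟩) (s 0 Ω) := by
  refine ⟨tCuntz hs ht0 ht1, ?_, ?_, ?_, ?_, ?_, ?_, ?_, ?_⟩
  · exact ortho_W hs ht0 ht1 hfix 0 2 (h02 hs hfix)
  · exact le_antisymm (V_le_even hs ht0 ht1 hfix)
      (sup_le (W_le_even hs ht0 ht1 hfix 0 rfl) (W_le_even hs ht0 ht1 hfix 2 rfl))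
  · exact pcond_of_cycle (tCuntz hs ht0 ht1) (hstep hs ht0 ht1 hfix)
  · exact pcond_shift hs ht0 ht1 hfix 2 wA wA_eq
  · exact ortho_W hs ht0 ht1 hfix 3 1 (h31 hs)
  · exact le_antisymm (V_le_odd hs ht0 ht1 hfix)
      (sup_le (W_le_odd hs ht0 ht1 hfix 3 rfl) (W_le_odd hs ht0 ht1 hfix 1 rfl))
  · exact pcond_shift hs ht0 ht1 hfix 3 wB wB_eq
  · exact pcond_shift hs ht0 ht1 hfix 1 wC wC_eq
end
end
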